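/- For $d = 1$, constant $\alpha \in (0,2)$, and $u(x) = e^{-x^2}$, the fractional Laplacian satisfies $(-\Delta)^{\alpha/2} u(x) = \frac{2^{\alpha}\,\Gamma(\frac{1+\alpha}{2})}{\Gamma(1/2)}\, {}_1F_1\big(\tfrac{1+\alpha}{2};\ \tfrac{1}{2};\ -x^2\big)$, where the fractional Laplacian is defined via the Fourier multiplier $|2\pi\xi|^{\alpha}$. -/

import Mathlib

open MeasureTheory Real

/-- Rising factorial (Pochhammer symbol). -/
noncomputable def poch (a : ℝ) (n : ℕ) : ℝ := ∏ k ∈ Finset.range n, (a + k)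

/-- Confluent hypergeometric function ₁F₁. -/
noncomputable def hyp1F1 (a b z : ℝ) : ℝ :=
  ∑' n : ℕ, poch a n / poch b n * z ^ n / n.factorial

open Set

lemma integrable_comp_abs' {f : ℝ → ℝ} (hf : IntegrableOn f (Ioi 0)) :
    Integrable fun x => f |x| := by
  have h1 : IntegrableOn (fun x => f |x|) (Ioi 0) := by
    apply hf.congr_fun (fun x hx => by rw [abs_of_pos hx]) measurableSet_Ioi
  have h2 : IntegrableOn (fun x ↦ f |x|) (Iic 0) := by
    rw [← Measure.map_neg_eq_self (volume : Measure ℝ)]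
    have m : MeasurableEmbedding fun x : ℝ => -x := (Homeomorph.neg ℝ).measurableEmbedding
    rw [m.integrableOn_map_iff]
    simp_rw [Function.comp_def, abs_neg, neg_preimage, neg_Iic, neg_zero]
    exact (integrableOn_Ici_iff_integrableOn_Ioi).mpr h1
  rw [← integrableOn_univ, ← Iic_union_Ioi (a := (0:ℝ))]
  exact h2.union h1

lemma integrable_abs_rpow_gauss {b s : ℝ} (hb : 0 < b) (hs : -1 < s) :
    Integrable fun x : ℝ => |x| ^ s * Real.exp (-b * x ^ 2) := by
  have := integrable_comp_abs' (f := fun x => |x| ^ s * Real.exp (-b * x ^ 2))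
    (((integrableOn_rpow_mul_exp_neg_mul_sq hb hs).congr_fun
      (fun x hx => by rw [abs_of_pos hx]) measurableSet_Ioi))
  simpa [abs_abs, sq_abs] using this

lemma integral_abs_rpow_gauss {b s : ℝ} (hb : 0 < b) (hs : -1 < s) :
    ∫ x : ℝ, |x| ^ s * Real.exp (-b * x ^ 2) =
      b ^ (-(s + 1) / 2) * Real.Gamma ((s + 1) / 2) := by
  have h1 : ∫ x : ℝ, |x| ^ s * Real.exp (-b * x ^ 2)
      = 2 * ∫ x in Ioi (0:ℝ), |x| ^ s * Real.exp (-b * x ^ 2) := by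
    rw [← integral_comp_abs (f := fun x => |x| ^ s * Real.exp (-b * x ^ 2))]
    simp [abs_abs, sq_abs]
  rw [h1, setIntegral_congr_fun measurableSet_Ioi
    (g := fun x => x ^ s * Real.exp (-b * x ^ (2:ℝ)))
    (fun x hx => by
      rw [abs_of_pos hx]
      norm_num)]
  rw [integral_rpow_mul_exp_neg_mul_rpow two_pos hs hb]
  ring


lemma poch_succ (a : ℝ) (n : ℕ) : poch a (n + 1) = poch a n * (a + n) :=
  Finset.prod_range_succ _ _

lemma poch_pos {a : ℝ} (ha : 0 < a) (n : ℕ) : 0 < poch a n :=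
  Finset.prod_pos fun k _ => by positivity

lemma Gamma_add_nat {a : ℝ} (ha : 0 < a) (n : ℕ) :
    Real.Gamma (a + n) = Real.Gamma a * poch a n := by
  induction n with
  | zero => simp [poch]
  | succ n ih =>
    have h : a + (n + 1 : ℕ) = (a + n) + 1 := by push_cast; ring
    rw [h, Real.Gamma_add_one (by positivity), ih, poch_succ]
    ring

lemma factorial_two_mul (n : ℕ) :
    ((2 * n).factorial : ℝ) = 4 ^ n * n.factorial * poch (1/2) n := by
  induction n with
  | zero => simp [poch]
  | succ n ih =>
    have h : 2 * (n + 1) = (2 * n + 1) + 1 := by ring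
    rw [h, Nat.factorial_succ, Nat.factorial_succ, poch_succ]
    push_cast [ih, Nat.factorial_succ]
    ring

lemma poch_le_poch {a : ℝ} (ha : 0 ≤ a) (hab : a ≤ 3/2) (n : ℕ) :
    poch a n ≤ (2 * n + 1) * poch (1/2) n := by
  have h32 : poch (3/2) n = (2 * n + 1) * poch (1/2) n := by
    induction n with
    | zero => simp [poch]
    | succ n ih => rw [poch_succ, poch_succ, ih]; push_cast; ring
  rw [← h32]
  exact Finset.prod_le_prod (fun k _ => by positivity)
    (fun k _ => by linarith [hab])

lemma fourier_gauss (ξ : ℝ) :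
    FourierTransform.fourier (fun t : ℝ => Complex.exp (-(t : ℂ) ^ 2)) ξ
      = ((Real.sqrt π * Real.exp (-(π ^ 2 * ξ ^ 2)) : ℝ) : ℂ) := by
  have h := fourierIntegral_gaussian (b := (1:ℂ)) (by norm_num)
    (((-2) * π * ξ : ℝ) : ℂ)
  rw [Real.fourier_real_eq_integral_exp_smul]
  have e1 : ∀ v : ℝ, Complex.exp (↑(-2 * π * v * ξ) * Complex.I) • Complex.exp (-(v:ℂ)^2)
      = Complex.exp (Complex.I * (((-2) * π * ξ : ℝ) : ℂ) * v) *
        Complex.exp (-(1:ℂ) * v ^ 2) := by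
    intro v
    rw [smul_eq_mul]
    congr 1
    · push_cast; ring
    · ring
  simp_rw [e1]
  rw [h]
  have e2 : (-(((-2) * π * ξ : ℝ) : ℂ) ^ 2 / (4 * 1)) = ((-(π ^ 2 * ξ ^ 2) : ℝ) : ℂ) := by
    push_cast; ring
  rw [e2, ← Complex.ofReal_exp, Real.sqrt_eq_rpow, Complex.ofReal_mul,
    Complex.ofReal_cpow pi_pos.le]
  norm_num

lemma integrand_eq {α : ℝ} (hα0 : 0 < α) (n : ℕ) (ξ : ℝ) :
    Real.exp (-(π^2*ξ^2)) * |2*π*ξ| ^ α * ξ^(2*n)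
      = (2*π)^α * (|ξ| ^ (α + 2*n) * Real.exp (-(π^2) * ξ^2)) := by
  have habs : |2*π*ξ| = (2*π) * |ξ| := by
    rw [abs_mul, abs_of_pos (by positivity : (0:ℝ) < 2*π)]
  have hkey : |ξ| ^ α * ξ^(2*n) = |ξ| ^ (α + 2*n) := by
    rcases eq_or_ne ξ 0 with rfl | hξ
    · have hs : α + 2*(n:ℝ) ≠ 0 := by
        have : (0:ℝ) ≤ n := Nat.cast_nonneg n
        intro h; nlinarith
      rw [abs_zero, Real.zero_rpow hα0.ne', Real.zero_rpow hs, zero_mul]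
    · have h2 : ξ ^ (2*n) = |ξ| ^ ((2*n : ℕ) : ℝ) := by
        rw [Real.rpow_natCast, pow_mul, pow_mul, sq_abs]
      rw [h2, ← Real.rpow_add (abs_pos.mpr hξ)]
      norm_num
  rw [habs, Real.mul_rpow (by positivity) (abs_nonneg ξ)]
  rw [← hkey]
  ring_nf

lemma integrable_moment {α : ℝ} (hα0 : 0 < α) (n : ℕ) :
    Integrable (fun ξ : ℝ => Real.exp (-(π^2*ξ^2)) * |2*π*ξ| ^ α * ξ^(2*n)) := by
  simp_rw [integrand_eq hα0 n]
  have hs : (-1:ℝ) < α + 2*n := by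
    have : (0:ℝ) ≤ n := Nat.cast_nonneg n
    linarith
  exact ((integrable_abs_rpow_gauss (by positivity) hs).const_mul _)

lemma integral_moment {α : ℝ} (hα0 : 0 < α) (n : ℕ) :
    ∫ ξ : ℝ, Real.exp (-(π^2*ξ^2)) * |2*π*ξ| ^ α * ξ^(2*n)
      = (2*π) ^ α * ((π^2) ^ (-(α + 2*n + 1)/2) * Real.Gamma ((α + 2*n + 1)/2)) := by
  simp_rw [integrand_eq hα0 n]
  have hs : (-1:ℝ) < α + 2*n := by
    have : (0:ℝ) ≤ n := Nat.cast_nonneg n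
    linarith
  rw [integral_const_mul, integral_abs_rpow_gauss (by positivity) hs]


lemma hpisq (t : ℝ) : (π^2:ℝ) ^ t = π ^ (2*t) := by
  rw [← Real.rpow_natCast π 2, ← Real.rpow_mul pi_pos.le]
  norm_num

lemma main_sum {α : ℝ} (hα0 : 0 < α) (hα2 : α < 2) (x : ℝ) :
    ∫ ξ : ℝ, Real.exp (-(π^2*ξ^2)) * |2*π*ξ| ^ α * Real.cos (2*π*x*ξ)
      = 2 ^ α * Real.Gamma ((1+α)/2) / π * hyp1F1 ((1+α)/2) (1/2) (-x^2) := by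
  set a : ℝ := (1+α)/2 with ha_def
  have ha : 0 < a := by rw [ha_def]; linarith
  have ha32 : a ≤ 3/2 := by rw [ha_def]; linarith
  set f : ℕ → ℝ → ℝ := fun n ξ =>
    ((-1)^n * (2*π*x)^(2*n) / (2*n).factorial) *
      (Real.exp (-(π^2*ξ^2)) * |2*π*ξ| ^ α * ξ^(2*n)) with hf_def
  have hpt : ∀ ξ : ℝ, Real.exp (-(π^2*ξ^2)) * |2*π*ξ| ^ α * Real.cos (2*π*x*ξ)
      = ∑' n, f n ξ := by
    intro ξ
    rw [Real.cos_eq_tsum, ← tsum_mul_left]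
    congr 1
    ext n
    simp only [hf_def]
    ring
  have hmeas : ∀ n, AEStronglyMeasurable (f n) (volume : Measure ℝ) := by
    intro n
    apply Continuous.aestronglyMeasurable
    apply continuous_const.mul
    exact ((Real.continuous_exp.comp (by continuity)).mul
      (((continuous_const.mul continuous_id).abs).rpow_const
        fun ξ => Or.inr hα0.le)).mul (continuous_pow _)
  have hint : ∀ n, Integrable (f n) := fun n => (integrable_moment hα0 n).const_mul _
  have hval : ∀ n, ∫ ξ, f n ξ = ((-1)^n * (2*π*x)^(2*n) / (2*n).factorial) *
      ((2*π) ^ α * ((π^2) ^ (-(α + 2*n + 1)/2) * Real.Gamma ((α + 2*n + 1)/2))) := by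
    intro n
    simp only [hf_def]
    rw [integral_const_mul, integral_moment hα0 n]
  have hnorm : ∀ n, ∫ ξ, ‖f n ξ‖ = ((2*π*x)^(2*n) / (2*n).factorial) *
      ((2*π) ^ α * ((π^2) ^ (-(α + 2*n + 1)/2) * Real.Gamma ((α + 2*n + 1)/2))) := by
    intro n
    have habs : ∀ ξ : ℝ, ‖f n ξ‖ = ((2*π*x)^(2*n) / (2*n).factorial) *
        (Real.exp (-(π^2*ξ^2)) * |2*π*ξ| ^ α * ξ^(2*n)) := by
      intro ξ
      rw [Real.norm_eq_abs]
      simp only [hf_def]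
      rw [abs_mul]
      congr 1
      · rw [abs_div, abs_mul, abs_pow, abs_neg, abs_one, one_pow, one_mul,
          Nat.abs_cast, abs_of_nonneg ((even_two_mul n).pow_nonneg (2*π*x))]
      · exact abs_of_nonneg (mul_nonneg (mul_nonneg (Real.exp_pos _).le
          (Real.rpow_nonneg (abs_nonneg _) _)) ((even_two_mul n).pow_nonneg ξ))
    simp_rw [habs]
    rw [integral_const_mul, integral_moment hα0 n]
  have hGamma : ∀ n : ℕ, Real.Gamma ((α + 2*n + 1)/2) = Real.Gamma a * poch a n := by
    intro n
    rw [← Gamma_add_nat ha n]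
    congr 1
    rw [ha_def]
    push_cast
    ring
  have hqpos : ∀ n, (0:ℝ) < poch (1/2) n := fun n => poch_pos one_half_pos n
  have hnorm' : ∀ n, ∫ ξ, ‖f n ξ‖ =
      (Real.Gamma a * ((2*π)^α * (π^2)^(-(α+1)/2))) *
        (poch a n / poch (1/2) n * (x^2)^n / n.factorial) := by
    intro n
    have e1 : (π^2:ℝ)^(-(α+2*(n:ℝ)+1)/2) = (π^2)^(-(α+1)/2) * ((π^2)⁻¹)^n := by
      rw [show (-(α+2*(n:ℝ)+1)/2) = (-(α+1)/2) + (-(n:ℝ)) by ring,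
        Real.rpow_add (by positivity), Real.rpow_neg (sq_nonneg π),
        Real.rpow_natCast, ← inv_pow]
    rw [hnorm n, hGamma n, e1, factorial_two_mul n,
      show (4:ℝ)^n = 2^(2*n) by rw [show (4:ℝ) = 2^2 by norm_num, ← pow_mul]]
    have hq := (hqpos n).ne'
    have hπ := Real.pi_ne_zero
    have hfn : ((n.factorial : ℕ):ℝ) ≠ 0 := Nat.cast_ne_zero.mpr n.factorial_ne_zero
    rw [inv_pow]
    field_simp
    ring
  have hsummable : Summable (fun n => ∫ ξ, ‖f n ξ‖) := by
    apply Summable.of_nonneg_of_le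
      (fun n => integral_nonneg fun ξ => norm_nonneg _)
      (fun n => ?_)
      ((Real.summable_pow_div_factorial (3*x^2)).mul_left
        ((Real.Gamma a * ((2*π)^α * (π^2)^(-(α+1)/2))) * 3))
    rw [hnorm' n]
    have hC : (0:ℝ) ≤ Real.Gamma a * ((2*π)^α * (π^2)^(-(α+1)/2)) := by
      have := Real.Gamma_pos_of_pos ha
      positivity
    have h1 : poch a n / poch (1/2) n ≤ 2*(n:ℝ)+1 := by
      rw [div_le_iff₀ (hqpos n)]
      exact poch_le_poch ha.le ha32 n
    have h2 : (2*(n:ℝ)+1) ≤ 3 * 3^n := by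
      have h3 : ((n:ℝ)+1) ≤ 2^n := by
        exact_mod_cast Nat.succ_le_of_lt (Nat.lt_two_pow_self (n := n))
      have h4 : (2:ℝ)^n ≤ 3^n := pow_le_pow_left₀ (by norm_num) (by norm_num) n
      linarith
    calc (Real.Gamma a * ((2*π)^α * (π^2)^(-(α+1)/2))) *
          (poch a n / poch (1/2) n * (x^2)^n / n.factorial)
        ≤ (Real.Gamma a * ((2*π)^α * (π^2)^(-(α+1)/2))) *
          ((2*(n:ℝ)+1) * (x^2)^n / n.factorial) := by
          gcongr
      _ ≤ (Real.Gamma a * ((2*π)^α * (π^2)^(-(α+1)/2))) *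
          ((3*3^n) * (x^2)^n / n.factorial) := by
          gcongr
      _ = (Real.Gamma a * ((2*π)^α * (π^2)^(-(α+1)/2))) * 3 * ((3*x^2)^n / n.factorial) := by
          rw [mul_pow]
          ring
  have hterm : ∀ n, ∫ ξ, f n ξ = (2^α * Real.Gamma a / π) *
      (poch a n / poch (1/2) n * (-x^2)^n / n.factorial) := by
    intro n
    have e2 : (π^2:ℝ)^(-(α+2*(n:ℝ)+1)/2) = (π^α * π^(2*n+1))⁻¹ := by
      rw [hpisq, show 2*(-(α+2*(n:ℝ)+1)/2) = -(α + ((2*n+1:ℕ):ℝ)) by push_cast; ring,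
        Real.rpow_neg pi_pos.le, Real.rpow_add pi_pos, Real.rpow_natCast]
    have e3 : (2*π:ℝ)^α = 2^α * π^α := Real.mul_rpow (by norm_num) pi_pos.le
    rw [hval n, hGamma n, factorial_two_mul n, e2, e3,
      show (4:ℝ)^n = 2^(2*n) by rw [show (4:ℝ) = 2^2 by norm_num, ← pow_mul]]
    have hq := (hqpos n).ne'
    have hπ := Real.pi_ne_zero
    have hπα : (π:ℝ)^α ≠ 0 := by positivity
    have hfn : ((n.factorial : ℕ):ℝ) ≠ 0 := Nat.cast_ne_zero.mpr n.factorial_ne_zero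
    field_simp
    ring
  have hsum_ne_top : ∑' n, ∫⁻ ξ, ‖f n ξ‖₊ ≠ ⊤ := by
    have he : ∀ n, ∫⁻ ξ, (‖f n ξ‖₊ : ENNReal) = ENNReal.ofReal (∫ ξ, ‖f n ξ‖) :=
      fun n => (ofReal_integral_norm_eq_lintegral_enorm (hint n)).symm
    simp_rw [he]
    rw [← ENNReal.ofReal_tsum_of_nonneg
      (fun n => integral_nonneg fun ξ => norm_nonneg _) hsummable]
    exact ENNReal.ofReal_ne_top
  calc ∫ ξ : ℝ, Real.exp (-(π^2*ξ^2)) * |2*π*ξ| ^ α * Real.cos (2*π*x*ξ)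
      = ∫ ξ : ℝ, ∑' n, f n ξ := by simp_rw [hpt]
    _ = ∑' n, ∫ ξ, f n ξ := integral_tsum hmeas hsum_ne_top
    _ = ∑' n, (2^α * Real.Gamma a / π) *
          (poch a n / poch (1/2) n * (-x^2)^n / n.factorial) := tsum_congr hterm
    _ = 2 ^ α * Real.Gamma a / π * hyp1F1 a (1/2) (-x^2) := tsum_mul_left

theorem fractional_laplacian_gaussian_1d (α : ℝ) (hα : α ∈ Set.Ioo (0 : ℝ) 2) (x : ℝ) :
    ∫ ξ : ℝ,
        (FourierTransform.fourier (fun t : ℝ => Complex.exp (-(t : ℂ) ^ 2)) ξ) *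
          ((|2 * π * ξ| ^ α : ℝ) : ℂ) * Complex.exp (2 * π * Complex.I * x * ξ)
      = ((2 ^ α * Real.Gamma ((1 + α) / 2) / Real.Gamma (1 / 2) *
          hyp1F1 ((1 + α) / 2) (1 / 2) (-x ^ 2) : ℝ) : ℂ) := by
  obtain ⟨hα0, hα2⟩ := hα
  have hsplit : ∀ ξ : ℝ,
      (FourierTransform.fourier (fun t : ℝ => Complex.exp (-(t : ℂ) ^ 2)) ξ) *
          ((|2 * π * ξ| ^ α : ℝ) : ℂ) * Complex.exp (2 * π * Complex.I * x * ξ)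
      = ((Real.sqrt π * Real.exp (-(π^2*ξ^2)) * |2*π*ξ| ^ α * Real.cos (2*π*x*ξ) : ℝ) : ℂ)
        + ((Real.sqrt π * Real.exp (-(π^2*ξ^2)) * |2*π*ξ| ^ α * Real.sin (2*π*x*ξ) : ℝ) : ℂ)
          * Complex.I := by
    intro ξ
    rw [fourier_gauss ξ,
      show (2 * (π:ℂ) * Complex.I * x * ξ) = ((2*π*x*ξ : ℝ) : ℂ) * Complex.I by
        push_cast; ring,
      Complex.exp_mul_I, ← Complex.ofReal_cos, ← Complex.ofReal_sin]
    push_cast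
    ring
  simp_rw [hsplit]
  have hA : Integrable (fun ξ : ℝ => Real.exp (-(π^2*ξ^2)) * |2*π*ξ| ^ α) := by
    have := integrable_moment hα0 0
    simpa using this
  have hF1 : Integrable (fun ξ : ℝ =>
      Real.sqrt π * Real.exp (-(π^2*ξ^2)) * |2*π*ξ| ^ α * Real.cos (2*π*x*ξ)) := by
    have h := (hA.bdd_mul (c := 1) (Continuous.aestronglyMeasurable (by continuity))
      (ae_of_all _ fun ξ => by rw [Real.norm_eq_abs]; exact Real.abs_cos_le_one _) :
        Integrable fun ξ : ℝ => Real.cos (2*π*x*ξ) * (Real.exp (-(π^2*ξ^2)) * |2*π*ξ| ^ α))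
    have h2 := h.const_mul (Real.sqrt π)
    apply h2.congr
    filter_upwards with ξ
    ring
  have hF2 : Integrable (fun ξ : ℝ =>
      Real.sqrt π * Real.exp (-(π^2*ξ^2)) * |2*π*ξ| ^ α * Real.sin (2*π*x*ξ)) := by
    have h := (hA.bdd_mul (c := 1) (Continuous.aestronglyMeasurable (by continuity))
      (ae_of_all _ fun ξ => by rw [Real.norm_eq_abs]; exact Real.abs_sin_le_one _) :
        Integrable fun ξ : ℝ => Real.sin (2*π*x*ξ) * (Real.exp (-(π^2*ξ^2)) * |2*π*ξ| ^ α))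
    have h2 := h.const_mul (Real.sqrt π)
    apply h2.congr
    filter_upwards with ξ
    ring
  have hI1 : Integrable (fun ξ : ℝ =>
      ((Real.sqrt π * Real.exp (-(π^2*ξ^2)) * |2*π*ξ| ^ α * Real.cos (2*π*x*ξ) : ℝ) : ℂ)) :=
    hF1.ofReal
  have hI2 : Integrable (fun ξ : ℝ =>
      ((Real.sqrt π * Real.exp (-(π^2*ξ^2)) * |2*π*ξ| ^ α * Real.sin (2*π*x*ξ) : ℝ) : ℂ)
        * Complex.I) :=
    hF2.ofReal.mul_const Complex.I
  rw [integral_add hI1 hI2, integral_mul_const]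
  have hodd : ∫ ξ : ℝ,
      Real.sqrt π * Real.exp (-(π^2*ξ^2)) * |2*π*ξ| ^ α * Real.sin (2*π*x*ξ) = 0 := by
    set F2 : ℝ → ℝ := fun ξ =>
      Real.sqrt π * Real.exp (-(π^2*ξ^2)) * |2*π*ξ| ^ α * Real.sin (2*π*x*ξ) with hF2_def
    have h1 : ∫ ξ : ℝ, F2 (-ξ) = ∫ ξ : ℝ, F2 ξ := integral_neg_eq_self _ _
    have h2 : ∀ ξ, F2 (-ξ) = - F2 ξ := by
      intro ξ
      simp only [hF2_def, mul_neg, neg_sq, abs_neg, Real.sin_neg]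
    simp_rw [h2, integral_neg] at h1
    linarith
  have h2z : (∫ ξ : ℝ,
      ((Real.sqrt π * Real.exp (-(π^2*ξ^2)) * |2*π*ξ| ^ α * Real.sin (2*π*x*ξ) : ℝ) : ℂ)) = 0 := by
    rw [integral_complex_ofReal, hodd, Complex.ofReal_zero]
  rw [h2z, zero_mul, add_zero]
  have hreal : ∫ ξ : ℝ,
      Real.sqrt π * Real.exp (-(π^2*ξ^2)) * |2*π*ξ| ^ α * Real.cos (2*π*x*ξ)
      = 2 ^ α * Real.Gamma ((1 + α) / 2) / Real.Gamma (1 / 2) *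
          hyp1F1 ((1 + α) / 2) (1 / 2) (-x ^ 2) := by
    have hstep : ∀ ξ : ℝ,
        Real.sqrt π * Real.exp (-(π^2*ξ^2)) * |2*π*ξ| ^ α * Real.cos (2*π*x*ξ)
        = Real.sqrt π * (Real.exp (-(π^2*ξ^2)) * |2*π*ξ| ^ α * Real.cos (2*π*x*ξ)) := by
      intro ξ; ring
    simp_rw [hstep]
    rw [integral_const_mul, main_sum hα0 hα2 x, Real.Gamma_one_half_eq]
    have hsq : Real.sqrt π * Real.sqrt π = π := Real.mul_self_sqrt pi_pos.le
    have hsπ : Real.sqrt π ≠ 0 := by positivity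
    field_simp
    linear_combination (hyp1F1 ((1+α)/2) (1/2) (-x^2)) * hsq
  rw [integral_complex_ofReal, hreal]
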